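/- For every symmetric 3×3 real matrix R there exists an orthogonal 3×3 real matrix A such that all three diagonal entries of A * R * Aᵀ are equal (hence each equals trace(R)/3). -/

import Mathlib

open Matrix

/-- On the unit circle, a linear form attains every value of modulus at most the norm. -/
lemma circle_lemma (a b e : ℝ) (h : e ^ 2 ≤ a ^ 2 + b ^ 2) :
    ∃ x y : ℝ, x ^ 2 + y ^ 2 = 1 ∧ a * x + b * y = e := by
  by_cases hn : a ^ 2 + b ^ 2 = 0
  · have ha : a = 0 := by nlinarith
    have hb : b = 0 := by nlinarith
    have he : e = 0 := by nlinarith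
    exact ⟨1, 0, by norm_num, by simp [ha, hb, he]⟩
  · have hn' : 0 < a ^ 2 + b ^ 2 := lt_of_le_of_ne (by positivity) (Ne.symm hn)
    set n := a ^ 2 + b ^ 2 with hndef
    set f := Real.sqrt (n - e ^ 2) with hf
    have hf2 : f ^ 2 = n - e ^ 2 := Real.sq_sqrt (by linarith)
    refine ⟨(a * e + b * f) / n, (b * e - a * f) / n, ?_, ?_⟩
    · field_simp
      nlinarith [hf2]
    · field_simp
      ring
  
/-- Half-angle: any point on the unit circle is of the form `(c²-s², 2cs)`. -/
lemma halfangle (x y : ℝ) (h : x ^ 2 + y ^ 2 = 1) :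
    ∃ c s : ℝ, c ^ 2 + s ^ 2 = 1 ∧ c ^ 2 - s ^ 2 = x ∧ 2 * (c * s) = y := by
  have hx1 : -1 ≤ x := by nlinarith
  by_cases hx : x = -1
  · have hy : y = 0 := by nlinarith
    exact ⟨0, 1, by norm_num, by norm_num [hx], by norm_num [hy]⟩
  · have hx1' : 0 < 1 + x := by rcases lt_or_eq_of_le hx1 with h' | h'; · linarith
                                · exact absurd h'.symm hx
    set c := Real.sqrt ((1 + x) / 2) with hc
    have hc2 : c ^ 2 = (1 + x) / 2 := Real.sq_sqrt (by linarith)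
    have hcpos : 0 < c := Real.sqrt_pos.mpr (by linarith)
    refine ⟨c, y / (2 * c), ?_, ?_, ?_⟩
    · field_simp
      nlinarith [hc2]
    · field_simp
      nlinarith [hc2]
    · field_simp

/-- One can rotate so that the (0,0)-type quadratic form hits any value between `p` and `r`. -/
lemma rot1 (p r q d : ℝ) (h : (d - p) * (d - r) ≤ 0) :
    ∃ c s : ℝ, c ^ 2 + s ^ 2 = 1 ∧ p * c ^ 2 + 2 * q * (c * s) + r * s ^ 2 = d := by
  have h' : (d - (p + r) / 2) ^ 2 ≤ ((p - r) / 2) ^ 2 + q ^ 2 := by nlinarith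
  obtain ⟨x, y, hxy, hlin⟩ := circle_lemma ((p - r) / 2) q (d - (p + r) / 2) h'
  obtain ⟨c, s, hcs, hc1, hc2⟩ := halfangle x y hxy
  refine ⟨c, s, hcs, ?_⟩
  have : p * c ^ 2 + 2 * q * (c * s) + r * s ^ 2
      = (p + r) / 2 * (c ^ 2 + s ^ 2) + (p - r) / 2 * (c ^ 2 - s ^ 2) + q * (2 * (c * s)) := by
    ring
  rw [this, hcs, hc1, hc2]
  linarith

/-- One can rotate so that the two diagonal entries of a symmetric 2×2 form are equal. -/
lemma rot2 (p r q : ℝ) :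
    ∃ c s : ℝ, c ^ 2 + s ^ 2 = 1 ∧ (p - r) * (c ^ 2 - s ^ 2) + 4 * q * (c * s) = 0 := by
  obtain ⟨x, y, hxy, hlin⟩ := circle_lemma (p - r) (2 * q) 0 (by nlinarith [sq_nonneg (p - r), sq_nonneg q])
  obtain ⟨c, s, hcs, hc1, hc2⟩ := halfangle x y hxy
  refine ⟨c, s, hcs, ?_⟩
  rw [show (p - r) * (c ^ 2 - s ^ 2) + 4 * q * (c * s)
      = (p - r) * (c ^ 2 - s ^ 2) + 2 * q * (2 * (c * s)) by ring, hc1, hc2]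
  linarith

noncomputable def G01 (c s : ℝ) : Matrix (Fin 3) (Fin 3) ℝ := !![c, s, 0; -s, c, 0; 0, 0, 1]
noncomputable def G12 (c s : ℝ) : Matrix (Fin 3) (Fin 3) ℝ := !![1, 0, 0; 0, c, s; 0, -s, c]

lemma G01_orth (c s : ℝ) (h : c ^ 2 + s ^ 2 = 1) : (G01 c s)ᵀ * G01 c s = 1 := by
  ext i j
  simp only [Matrix.mul_apply, Matrix.transpose_apply, Fin.sum_univ_three, Matrix.one_apply]
  fin_cases i <;> fin_cases j <;> simp [G01, Matrix.vecHead, Matrix.vecTail] <;> nlinarith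

lemma G12_orth (c s : ℝ) (h : c ^ 2 + s ^ 2 = 1) : (G12 c s)ᵀ * G12 c s = 1 := by
  ext i j
  simp only [Matrix.mul_apply, Matrix.transpose_apply, Fin.sum_univ_three, Matrix.one_apply]
  fin_cases i <;> fin_cases j <;> simp [G12, Matrix.vecHead, Matrix.vecTail] <;> nlinarith

lemma conj_symm (R A : Matrix (Fin 3) (Fin 3) ℝ) (hR : Rᵀ = R) :
    (A * R * Aᵀ)ᵀ = A * R * Aᵀ := by
  simp [Matrix.transpose_mul, hR, Matrix.mul_assoc]

lemma conj_trace (R A : Matrix (Fin 3) (Fin 3) ℝ) (hA : Aᵀ * A = 1) :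
    Matrix.trace (A * R * Aᵀ) = Matrix.trace R := by
  rw [Matrix.trace_mul_comm, ← Matrix.mul_assoc, hA, Matrix.one_mul]

/-- Reduction: it suffices to prove the claim for an orthogonal conjugate of `R`. -/
lemma conj_reduce (R A : Matrix (Fin 3) (Fin 3) ℝ) (hA : Aᵀ * A = 1)
    (h : ∃ B : Matrix (Fin 3) (Fin 3) ℝ, Bᵀ * B = 1 ∧
      ∀ i, (B * (A * R * Aᵀ) * Bᵀ) i i = Matrix.trace (A * R * Aᵀ) / 3) :
    ∃ C : Matrix (Fin 3) (Fin 3) ℝ, Cᵀ * C = 1 ∧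
      ∀ i, (C * R * Cᵀ) i i = Matrix.trace R / 3 := by
  obtain ⟨B, hB, hdiag⟩ := h
  refine ⟨B * A, ?_, ?_⟩
  · rw [Matrix.transpose_mul, Matrix.mul_assoc, ← Matrix.mul_assoc Bᵀ, hB,
      Matrix.one_mul, hA]
  · intro i
    have : B * A * R * (B * A)ᵀ = B * (A * R * Aᵀ) * Bᵀ := by
      rw [Matrix.transpose_mul]
      simp only [Matrix.mul_assoc]
    rw [this, hdiag i, conj_trace R A hA]

/-- Key case: the claim when `trace R / 3` lies between `R 0 0` and `R 1 1`. -/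
lemma key (R : Matrix (Fin 3) (Fin 3) ℝ) (hR : Rᵀ = R)
    (h01 : (Matrix.trace R / 3 - R 0 0) * (Matrix.trace R / 3 - R 1 1) ≤ 0) :
    ∃ A : Matrix (Fin 3) (Fin 3) ℝ, Aᵀ * A = 1 ∧
      ∀ i, (A * R * Aᵀ) i i = Matrix.trace R / 3 := by
  set d := Matrix.trace R / 3 with hd
  have hsym : R 1 0 = R 0 1 := by nth_rewrite 1 [← hR]; rw [Matrix.transpose_apply]
  have htr : R 0 0 + R 1 1 + R 2 2 = 3 * d := by
    rw [hd, Matrix.trace_fin_three]; ring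
  -- Step 1: rotate in the (0,1) plane so that entry (0,0) becomes d.
  obtain ⟨c₁, s₁, hcs₁, heq₁⟩ := rot1 (R 0 0) (R 1 1) (R 0 1) d (by nlinarith)
  set R1 := G01 c₁ s₁ * R * (G01 c₁ s₁)ᵀ with hR1
  have hR1sym : R1ᵀ = R1 := conj_symm R _ hR
  have hR1tr : Matrix.trace R1 = Matrix.trace R := conj_trace R _ (G01_orth c₁ s₁ hcs₁)
  have e00 : R1 0 0 = d := by
    have : R1 0 0 = R 0 0 * c₁ ^ 2 + 2 * R 0 1 * (c₁ * s₁) + R 1 1 * s₁ ^ 2 := by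
      simp only [hR1, Matrix.mul_apply, Matrix.transpose_apply, Fin.sum_univ_three]
      simp [G01, hsym, Matrix.vecHead, Matrix.vecTail]
      ring
    rw [this]; linarith [heq₁]
  have hR1sym' : R1 2 1 = R1 1 2 := by nth_rewrite 1 [← hR1sym]; rw [Matrix.transpose_apply]
  have htr1 : R1 0 0 + R1 1 1 + R1 2 2 = 3 * d := by
    have := hR1tr
    rw [Matrix.trace_fin_three, Matrix.trace_fin_three] at this
    linarith
  -- Step 2: rotate in the (1,2) plane to equalize entries (1,1) and (2,2).
  obtain ⟨c₂, s₂, hcs₂, heq₂⟩ := rot2 (R1 1 1) (R1 2 2) (R1 1 2)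
  refine ⟨G12 c₂ s₂ * G01 c₁ s₁, ?_, ?_⟩
  · rw [Matrix.transpose_mul, Matrix.mul_assoc, ← Matrix.mul_assoc (G12 c₂ s₂)ᵀ,
      G12_orth c₂ s₂ hcs₂, Matrix.one_mul, G01_orth c₁ s₁ hcs₁]
  · have hconj : G12 c₂ s₂ * G01 c₁ s₁ * R * (G12 c₂ s₂ * G01 c₁ s₁)ᵀ
        = G12 c₂ s₂ * R1 * (G12 c₂ s₂)ᵀ := by
      rw [Matrix.transpose_mul, hR1]
      simp only [Matrix.mul_assoc]
    intro i
    rw [hconj]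
    have f00 : (G12 c₂ s₂ * R1 * (G12 c₂ s₂)ᵀ) 0 0 = R1 0 0 := by
      simp only [Matrix.mul_apply, Matrix.transpose_apply, Fin.sum_univ_three]
      simp [G12, Matrix.vecHead, Matrix.vecTail]
    have f11 : (G12 c₂ s₂ * R1 * (G12 c₂ s₂)ᵀ) 1 1
        = R1 1 1 * c₂ ^ 2 + 2 * R1 1 2 * (c₂ * s₂) + R1 2 2 * s₂ ^ 2 := by
      simp only [Matrix.mul_apply, Matrix.transpose_apply, Fin.sum_univ_three]
      simp [G12, hR1sym', Matrix.vecHead, Matrix.vecTail]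
      ring
    have f22 : (G12 c₂ s₂ * R1 * (G12 c₂ s₂)ᵀ) 2 2
        = R1 1 1 * s₂ ^ 2 - 2 * R1 1 2 * (c₂ * s₂) + R1 2 2 * c₂ ^ 2 := by
      simp only [Matrix.mul_apply, Matrix.transpose_apply, Fin.sum_univ_three]
      simp [G12, hR1sym', Matrix.vecHead, Matrix.vecTail]
      ring
    fin_cases i
    · show (G12 c₂ s₂ * R1 * (G12 c₂ s₂)ᵀ) 0 0 = d
      rw [f00, e00]
    · show (G12 c₂ s₂ * R1 * (G12 c₂ s₂)ᵀ) 1 1 = d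
      rw [f11]
      have hpr : R1 1 1 + R1 2 2 = 2 * d := by linarith
      linear_combination ((R1 1 1 + R1 2 2) / 2) * hcs₂ + (1 / 2) * heq₂ + (1 / 2) * hpr
    · show (G12 c₂ s₂ * R1 * (G12 c₂ s₂)ᵀ) 2 2 = d
      rw [f22]
      have hpr : R1 1 1 + R1 2 2 = 2 * d := by linarith
      linear_combination ((R1 1 1 + R1 2 2) / 2) * hcs₂ - (1 / 2) * heq₂ + (1 / 2) * hpr

def P12 : Matrix (Fin 3) (Fin 3) ℝ := !![1, 0, 0; 0, 0, 1; 0, 1, 0]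
def P02 : Matrix (Fin 3) (Fin 3) ℝ := !![0, 0, 1; 0, 1, 0; 1, 0, 0]

lemma P12_orth : P12ᵀ * P12 = 1 := by
  ext i j
  simp only [Matrix.mul_apply, Matrix.transpose_apply, Fin.sum_univ_three, Matrix.one_apply]
  fin_cases i <;> fin_cases j <;> simp [P12, Matrix.vecHead, Matrix.vecTail]

lemma P02_orth : P02ᵀ * P02 = 1 := by
  ext i j
  simp only [Matrix.mul_apply, Matrix.transpose_apply, Fin.sum_univ_three, Matrix.one_apply]
  fin_cases i <;> fin_cases j <;> simp [P02, Matrix.vecHead, Matrix.vecTail]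

/-- Every symmetric `3 × 3` real matrix can be orthogonally conjugated so that all its
diagonal entries are equal (to one third of the trace). -/
theorem stmt7 (R : Matrix (Fin 3) (Fin 3) ℝ) (hR : Rᵀ = R) :
    ∃ A : Matrix (Fin 3) (Fin 3) ℝ, Aᵀ * A = 1 ∧
      ∀ i, (A * R * Aᵀ) i i = Matrix.trace R / 3 := by
  set d := Matrix.trace R / 3 with hd
  have htr : R 0 0 + R 1 1 + R 2 2 = 3 * d := by
    rw [hd, Matrix.trace_fin_three]; ring
  by_cases h01 : (d - R 0 0) * (d - R 1 1) ≤ 0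
  · exact key R hR h01
  by_cases h02 : (d - R 0 0) * (d - R 2 2) ≤ 0
  · -- swap indices 1 and 2
    refine conj_reduce R P12 P12_orth ?_
    have htr' : Matrix.trace (P12 * R * P12ᵀ) = Matrix.trace R := conj_trace R P12 P12_orth
    apply key _ (conj_symm R P12 hR)
    have e0 : (P12 * R * P12ᵀ) 0 0 = R 0 0 := by
      simp only [Matrix.mul_apply, Matrix.transpose_apply, Fin.sum_univ_three]
      simp [P12, Matrix.vecHead, Matrix.vecTail]
    have e1 : (P12 * R * P12ᵀ) 1 1 = R 2 2 := by
      simp only [Matrix.mul_apply, Matrix.transpose_apply, Fin.sum_univ_three]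
      simp [P12, Matrix.vecHead, Matrix.vecTail]
    rw [htr', e0, e1, ← hd]
    exact h02
  by_cases h12 : (d - R 1 1) * (d - R 2 2) ≤ 0
  · -- swap indices 0 and 2
    refine conj_reduce R P02 P02_orth ?_
    have htr' : Matrix.trace (P02 * R * P02ᵀ) = Matrix.trace R := conj_trace R P02 P02_orth
    apply key _ (conj_symm R P02 hR)
    have e0 : (P02 * R * P02ᵀ) 0 0 = R 2 2 := by
      simp only [Matrix.mul_apply, Matrix.transpose_apply, Fin.sum_univ_three]
      simp [P02, Matrix.vecHead, Matrix.vecTail]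
    have e1 : (P02 * R * P02ᵀ) 1 1 = R 1 1 := by
      simp only [Matrix.mul_apply, Matrix.transpose_apply, Fin.sum_univ_three]
      simp [P02, Matrix.vecHead, Matrix.vecTail]
    rw [htr', e0, e1, ← hd]
    nlinarith [h12]
  · exfalso
    push_neg at h01 h02 h12
    have hsum : (d - R 0 0) + (d - R 1 1) + (d - R 2 2) = 0 := by linarith
    nlinarith [h01, h02, h12, hsum, sq_nonneg (d - R 0 0), sq_nonneg (d - R 1 1),
      sq_nonneg (d - R 2 2)]
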